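/- Let W₁, W₂ be n×n real symmetric positive definite matrices with W₁ ⪯ W₂ (i.e., W₂ − W₁ positive semidefinite), and let W_a be an n×n real symmetric positive semidefinite matrix. Then log det(W₂ + W_a) − log det(W₂) ≤ log det(W₁ + W_a) − log det(W₁). -/

import Mathlib

set_option maxHeartbeats 1000000

open Matrix

section Aux

variable {m : Type*} [Fintype m] [DecidableEq m]

open scoped MatrixOrder in
/-- Square root of a PSD matrix (via the continuous functional calculus). -/
noncomputable def Matrix.PosSemidef.sqrt {A : Matrix m m ℝ} (_hA : A.PosSemidef) :
    Matrix m m ℝ :=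
  CFC.sqrt A

open scoped MatrixOrder in
lemma Matrix.PosSemidef.sqrt_mul_self {A : Matrix m m ℝ} (hA : A.PosSemidef) :
    hA.sqrt * hA.sqrt = A :=
  CFC.sqrt_mul_sqrt_self A hA.nonneg

open scoped MatrixOrder in
lemma Matrix.PosSemidef.posSemidef_sqrt {A : Matrix m m ℝ} (hA : A.PosSemidef) :
    hA.sqrt.PosSemidef :=
  (CFC.sqrt_nonneg A).posSemidef

/-- Conjugation by a hermitian (real symmetric) matrix preserves PSD. -/
lemma psd_conj {P R : Matrix m m ℝ} (hP : P.PosSemidef) (hR : R.IsHermitian) :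
    (R * P * R).PosSemidef := by
  have := hP.mul_mul_conjTranspose_same R
  rwa [hR.eq] at this

lemma one_le_det_one_add {P : Matrix m m ℝ} (hP : P.PosSemidef) :
    1 ≤ (1 + P).det := by
  have hd : star (hP.1.eigenvectorUnitary : Matrix m m ℝ) * P * (hP.1.eigenvectorUnitary : Matrix m m ℝ)
      = diagonal (RCLike.ofReal ∘ hP.1.eigenvalues) := by
    have := hP.1.conjStarAlgAut_star_eigenvectorUnitary
    rwa [Unitary.conjStarAlgAut_star_apply] at this
  set U := (hP.1.eigenvectorUnitary : Matrix m m ℝ) with hUdef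
  have hsU : star U * U = 1 := mem_unitaryGroup_iff'.mp hP.1.eigenvectorUnitary.2
  have key : star U * (1 + P) * U
      = 1 + diagonal (RCLike.ofReal ∘ hP.1.eigenvalues) := by
    rw [Matrix.mul_add, Matrix.mul_one, Matrix.add_mul, hsU, hd]
  have hdetU : det (star U) * det U = 1 := by
    rw [← det_mul, hsU, det_one]
  have hdet : (1 + P).det
      = ((1 + diagonal (RCLike.ofReal ∘ hP.1.eigenvalues) : Matrix m m ℝ)).det := by
    have h5 := congrArg det key
    rw [det_mul, det_mul] at h5
    linear_combination h5 - (1 + P).det * hdetU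
  rw [hdet, ← diagonal_one, diagonal_add, det_diagonal]
  calc (1 : ℝ) = ∏ _i : m, (1 : ℝ) := by simp
    _ ≤ _ := by
        refine Finset.prod_le_prod (fun i _ => zero_le_one) fun i _ => ?_
        have := hP.eigenvalues_nonneg i
        simp only [Pi.add_apply, Pi.one_apply, Function.comp_apply,
          RCLike.ofReal_real_eq_id, id]
        linarith

/-- Determinant is monotone w.r.t. the Loewner order (on the PD/PSD cone). -/
lemma det_le_det_loewner {A B : Matrix m m ℝ} (hA : A.PosDef)
    (hBA : (B - A).PosSemidef) : A.det ≤ B.det := by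
  set N := hA.inv.posSemidef.sqrt with hN
  have hN2 : N * N = A⁻¹ := hA.inv.posSemidef.sqrt_mul_self
  have hNh : N.IsHermitian := hA.inv.posSemidef.posSemidef_sqrt.1
  have hpsd : (N * (B - A) * N).PosSemidef := psd_conj hBA hNh
  have h1 : (1 : ℝ) ≤ (1 + N * (B - A) * N).det := one_le_det_one_add hpsd
  have hcomm : (1 + N * (B - A) * N).det = (1 + (B - A) * A⁻¹).det := by
    rw [Matrix.mul_assoc, det_one_add_mul_comm, Matrix.mul_assoc, hN2]
  have hAdet : IsUnit A.det := hA.det_pos.ne'.isUnit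
  have hfact : (1 + (B - A) * A⁻¹) * A = B := by
    rw [Matrix.add_mul, Matrix.one_mul, Matrix.mul_assoc, Matrix.nonsing_inv_mul _ hAdet,
      Matrix.mul_one]
    abel
  have hBdet : B.det = (1 + (B - A) * A⁻¹).det * A.det := by
    conv_lhs => rw [← hfact]
    rw [det_mul]
  rw [hBdet]
  nlinarith [hA.det_pos, h1, hcomm]

/-- `√(M⁻¹) * M * √(M⁻¹) = 1` for positive definite `M`. -/
lemma sqrt_inv_conj_eq_one {M : Matrix m m ℝ} (hM : M.PosDef) :
    hM.inv.posSemidef.sqrt * M * hM.inv.posSemidef.sqrt = 1 := by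
  set N := hM.inv.posSemidef.sqrt with hN
  have hN2 : N * N = M⁻¹ := hM.inv.posSemidef.sqrt_mul_self
  have hMdet : IsUnit M.det := hM.det_pos.ne'.isUnit
  set T := N * M * N with hT
  have hNdet : det N * det N = det M⁻¹ := by rw [← det_mul, hN2]
  have hMinvdet : det M⁻¹ ≠ 0 := by
    have := hM.inv.det_pos; exact this.ne'
  have hNdet0 : det N ≠ 0 := fun h => hMinvdet (by rw [← hNdet, h, mul_zero])
  have hTdet : IsUnit T.det := by
    rw [hT, det_mul, det_mul]
    have : det N * det M * det N ≠ 0 :=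
      mul_ne_zero (mul_ne_zero hNdet0 hM.det_pos.ne') hNdet0
    exact this.isUnit
  have hTT : T * T = T := by
    have h6 : T * T = N * (M * (N * N) * M) * N := by
      rw [hT]; simp only [Matrix.mul_assoc]
    rw [h6, hN2, Matrix.mul_nonsing_inv _ hMdet, Matrix.one_mul, hT, Matrix.mul_assoc]
  have h7 : T * T * T⁻¹ = T * T⁻¹ := by rw [hTT]
  rwa [Matrix.mul_assoc, Matrix.mul_nonsing_inv _ hTdet, Matrix.mul_one] at h7

/-- If `M` is positive definite and `M ⪯ 1`, then `1 ⪯ M⁻¹`. -/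
lemma inv_sub_one_psd {M : Matrix m m ℝ} (hM : M.PosDef)
    (h1 : ((1 : Matrix m m ℝ) - M).PosSemidef) : (M⁻¹ - 1).PosSemidef := by
  set S := hM.inv.posSemidef.sqrt with hS
  have hS2 : S * S = M⁻¹ := hM.inv.posSemidef.sqrt_mul_self
  have hSh : S.IsHermitian := hM.inv.posSemidef.posSemidef_sqrt.1
  have hSMS : S * M * S = 1 := sqrt_inv_conj_eq_one hM
  have key : S * (1 - M) * S = M⁻¹ - 1 := by
    rw [Matrix.mul_sub, Matrix.mul_one, Matrix.sub_mul, hS2, hSMS]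
  rw [← key]
  exact psd_conj h1 hSh

lemma exists_inv_sqrt {M : Matrix m m ℝ} (hM : M.PosDef) :
    ∃ R : Matrix m m ℝ, R.IsHermitian ∧ R * R = M⁻¹ ∧ R * M * R = 1 ∧ IsUnit R.det := by
  refine ⟨hM.inv.posSemidef.sqrt, hM.inv.posSemidef.posSemidef_sqrt.1,
    hM.inv.posSemidef.sqrt_mul_self, sqrt_inv_conj_eq_one hM, ?_⟩
  have hRdet : det hM.inv.posSemidef.sqrt * det hM.inv.posSemidef.sqrt = det M⁻¹ := by
    rw [← det_mul, hM.inv.posSemidef.sqrt_mul_self]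
  have h0 : det M⁻¹ ≠ 0 := hM.inv.det_pos.ne'
  have hne : det hM.inv.posSemidef.sqrt ≠ 0 := fun h => h0 (by rw [← hRdet, h, mul_zero])
  exact hne.isUnit

/-- Matrix inverse is antitone w.r.t. the Loewner order on PD matrices. -/
lemma inv_antitone {W₁ W₂ : Matrix m m ℝ} (h₁ : W₁.PosDef) (h₂ : W₂.PosDef)
    (h₁₂ : (W₂ - W₁).PosSemidef) : (W₁⁻¹ - W₂⁻¹).PosSemidef := by
  obtain ⟨R, hRh, hR2, hRW₂R, hRdet0⟩ := exists_inv_sqrt h₂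
  have hCpd : (R * W₁ * R).PosDef := by
    refine Matrix.PosDef.of_dotProduct_mulVec_pos ?_ ?_
    · show (R * W₁ * R)ᴴ = R * W₁ * R
      rw [conjTranspose_mul, conjTranspose_mul, hRh.eq, h₁.isHermitian.eq, Matrix.mul_assoc]
    · intro x hx
      have hx' : R *ᵥ x ≠ 0 := by
        intro h
        apply hx
        have := congrArg (fun v => R⁻¹ *ᵥ v) h
        simpa [mulVec_mulVec, Matrix.nonsing_inv_mul _ hRdet0] using this
      have h8 := h₁.dotProduct_mulVec_pos hx'
      simp only [star_mulVec, Matrix.dotProduct_mulVec, vecMul_vecMul, hRh.eq] at h8 ⊢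
      exact h8
  have h1C : ((1 : Matrix m m ℝ) - R * W₁ * R) = R * (W₂ - W₁) * R := by
    rw [Matrix.mul_sub, Matrix.sub_mul, hRW₂R]
  have h1Cpsd : ((1 : Matrix m m ℝ) - R * W₁ * R).PosSemidef := by
    rw [h1C]; exact psd_conj h₁₂ hRh
  have hCinv : ((R * W₁ * R)⁻¹ - 1).PosSemidef := inv_sub_one_psd hCpd h1Cpsd
  have hCinv_eq : R * (R * W₁ * R)⁻¹ * R = W₁⁻¹ := by
    rw [Matrix.mul_inv_rev, Matrix.mul_inv_rev]
    rw [← Matrix.mul_assoc, ← Matrix.mul_assoc, Matrix.mul_nonsing_inv _ hRdet0,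
      Matrix.one_mul, Matrix.mul_assoc, Matrix.nonsing_inv_mul _ hRdet0, Matrix.mul_one]
  have key : R * ((R * W₁ * R)⁻¹ - 1) * R = W₁⁻¹ - W₂⁻¹ := by
    rw [Matrix.mul_sub, Matrix.sub_mul, hCinv_eq, Matrix.mul_one, hR2]
  rw [← key]
  exact psd_conj hCinv hRh

end Aux

/-- Diminishing-gains inequality for the log determinant: if `W₁ ⪯ W₂` are positive definite
and `W_a` is positive semidefinite, then
`log det(W₂ + W_a) − log det(W₂) ≤ log det(W₁ + W_a) − log det(W₁)`. -/
theorem logdet_diminishing_gains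
    {n : ℕ} (W₁ W₂ Wa : Matrix (Fin n) (Fin n) ℝ)
    (h₁ : W₁.PosDef) (h₂ : W₂.PosDef) (h₁₂ : (W₂ - W₁).PosSemidef)
    (ha : Wa.PosSemidef) :
    Real.log (W₂ + Wa).det - Real.log W₂.det ≤
      Real.log (W₁ + Wa).det - Real.log W₁.det := by
  set S := ha.sqrt with hSdef
  have hS2 : S * S = Wa := ha.sqrt_mul_self
  have hSh : S.IsHermitian := ha.posSemidef_sqrt.1
  set K₁ := S * W₁⁻¹ * S with hK₁
  set K₂ := S * W₂⁻¹ * S with hK₂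
  have hK₁psd : K₁.PosSemidef := psd_conj h₁.inv.posSemidef hSh
  have hK₂psd : K₂.PosSemidef := psd_conj h₂.inv.posSemidef hSh
  -- det (Wᵢ + Wa) = det Wᵢ * det (1 + Kᵢ)
  have hfact : ∀ (W : Matrix (Fin n) (Fin n) ℝ), W.PosDef →
      (W + Wa).det = W.det * (1 + S * W⁻¹ * S).det := by
    intro W hW
    have hWdet : IsUnit W.det := hW.det_pos.ne'.isUnit
    have h1 : W * (1 + W⁻¹ * Wa) = W + Wa := by
      rw [Matrix.mul_add, Matrix.mul_one, ← Matrix.mul_assoc,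
        Matrix.mul_nonsing_inv _ hWdet, Matrix.one_mul]
    have h2 : (1 + W⁻¹ * Wa).det = (1 + S * W⁻¹ * S).det := by
      rw [← hS2, ← Matrix.mul_assoc]
      rw [show W⁻¹ * S * S = (W⁻¹ * S) * S from rfl, det_one_add_mul_comm,
        Matrix.mul_assoc]
    rw [← h1, det_mul, h2]
  have hd₁ : (W₁ + Wa).det = W₁.det * (1 + K₁).det := hfact W₁ h₁
  have hd₂ : (W₂ + Wa).det = W₂.det * (1 + K₂).det := hfact W₂ h₂
  -- det (1 + K₂) ≤ det (1 + K₁)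
  have hA2pd : (1 + K₂).PosDef := Matrix.PosDef.one.add_posSemidef hK₂psd
  have hsub : ((1 + K₁) - (1 + K₂)).PosSemidef := by
    have : (1 + K₁) - (1 + K₂) = S * (W₁⁻¹ - W₂⁻¹) * S := by
      rw [hK₁, hK₂, Matrix.mul_sub, Matrix.sub_mul]
      abel
    rw [this]
    exact psd_conj (inv_antitone h₁ h₂ h₁₂) hSh
  have hdetle : (1 + K₂).det ≤ (1 + K₁).det := det_le_det_loewner hA2pd hsub
  have hA1pd : (1 + K₁).PosDef := Matrix.PosDef.one.add_posSemidef hK₁psd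
  rw [hd₁, hd₂, Real.log_mul h₂.det_pos.ne' hA2pd.det_pos.ne',
    Real.log_mul h₁.det_pos.ne' hA1pd.det_pos.ne']
  have := Real.log_le_log hA2pd.det_pos hdetle
  linarith
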